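/- arXiv:1011.5093 — 2 statements merged into one kernel-verified Lean document; each statement's English description precedes it below -/
import Mathlib

section
/- Let Λ be a proper Lorentz transformation satisfying condition (CM) for p, q ∈ ℝⁿ, and define k ∈ ℝⁿ by k^i = Λ^i_μ (p^μ − q^μ) for i = 1, …, n (the spatial rows of Λ applied to p^μ − q^μ). Then |k| = ϱ(p,q). -/
noncomputable section

open MeasureTheory Metric Matrix

namespace RelBoltz

/-- The energy `p⁰ = √(c² + |p|²)` of a relativistic particle with momentum `p ∈ ℝⁿ`. -/
def energy (n : ℕ) (c : ℝ) (p : EuclideanSpace ℝ (Fin n)) : ℝ :=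
  Real.sqrt (c ^ 2 + ‖p‖ ^ 2)

/-- The Euclidean dot product on `ℝⁿ`. -/
def dot (n : ℕ) (p q : EuclideanSpace ℝ (Fin n)) : ℝ := ∑ i, p i * q i

/-- The relative momentum `ϱ(p,q) = √(2(p⁰q⁰ − p·q − c²))`. -/
def relMom (n : ℕ) (c : ℝ) (p q : EuclideanSpace ℝ (Fin n)) : ℝ :=
  Real.sqrt (2 * (energy n c p * energy n c q - dot n p q - c ^ 2))

/-- The quantity `s(p,q) = 2(p⁰q⁰ − p·q + c²)`. -/
def sQ (n : ℕ) (c : ℝ) (p q : EuclideanSpace ℝ (Fin n)) : ℝ :=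
  2 * (energy n c p * energy n c q - dot n p q + c ^ 2)

/-- The Minkowski metric `g = diag(−1, 1, …, 1)` as a `(1+n)×(1+n)` matrix. -/
def eta (n : ℕ) : Matrix (Fin (n + 1)) (Fin (n + 1)) ℝ :=
  Matrix.diagonal fun μ => if μ = 0 then -1 else 1

/-- A proper Lorentz transformation: `det Λ = 1` and `Λᵀ g Λ = g`. -/
def IsLorentz (n : ℕ) (Λ : Matrix (Fin (n + 1)) (Fin (n + 1)) ℝ) : Prop :=
  Λ.det = 1 ∧ Λᵀ * eta n * Λ = eta n

/-- The four-vector `p^μ = (p⁰, p) ∈ ℝ^{1+n}`. -/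
def fourVec (n : ℕ) (c : ℝ) (p : EuclideanSpace ℝ (Fin n)) : Fin (n + 1) → ℝ :=
  Fin.cons (energy n c p) fun i => p i

/-- Condition (CM): `Λ^μ_ν (p^ν + q^ν) = (√s, 0, …, 0)`. -/
def CM (n : ℕ) (c : ℝ) (Λ : Matrix (Fin (n + 1)) (Fin (n + 1)) ℝ)
    (p q : EuclideanSpace ℝ (Fin n)) : Prop :=
  Λ.mulVec (fourVec n c p + fourVec n c q) = Fin.cons (Real.sqrt (sQ n c p q)) (fun _ => (0 : ℝ))

/-- The candidate inverse `g Λᵀ g` of a Lorentz transformation. -/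
def Linv (n : ℕ) (Λ : Matrix (Fin (n + 1)) (Fin (n + 1)) ℝ) :
    Matrix (Fin (n + 1)) (Fin (n + 1)) ℝ :=
  eta n * Λᵀ * eta n

/-- The quantity `ρ = (p⁰+q⁰)/√s` appearing in the boost matrix. -/
def rhoB (n : ℕ) (c : ℝ) (p q : EuclideanSpace ℝ (Fin n)) : ℝ :=
  (energy n c p + energy n c q) / Real.sqrt (sQ n c p q)

/-- The boost matrix `Λ_b = [[ρ, −ρ vᵀ], [−ρ v, Iₙ + (ρ−1) v vᵀ/|v|²]]`
with `v = (p+q)/(p⁰+q⁰)`. -/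
def boost (n : ℕ) (c : ℝ) (p q : EuclideanSpace ℝ (Fin n)) :
    Matrix (Fin (n + 1)) (Fin (n + 1)) ℝ :=
  Matrix.of fun μ ν =>
    Fin.cases
      (Fin.cases (rhoB n c p q)
        (fun j => -rhoB n c p q * ((p j + q j) / (energy n c p + energy n c q))) ν)
      (fun i =>
        Fin.cases (-rhoB n c p q * ((p i + q i) / (energy n c p + energy n c q)))
          (fun j =>
            (if i = j then (1 : ℝ) else 0) +
              (rhoB n c p q - 1) *
                ((p i + q i) / (energy n c p + energy n c q)) *
                ((p j + q j) / (energy n c p + energy n c q)) /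
                (∑ k, ((p k + q k) / (energy n c p + energy n c q)) ^ 2)) ν) μ

/-- The vector `k ∈ ℝⁿ`, `k^i = Λ^i_μ (p^μ − q^μ)` (spatial rows of `Λ` applied
to `p^μ − q^μ`). -/
def kvec (n : ℕ) (c : ℝ) (Λ : Matrix (Fin (n + 1)) (Fin (n + 1)) ℝ)
    (p q : EuclideanSpace ℝ (Fin n)) : EuclideanSpace ℝ (Fin n) :=
  WithLp.toLp 2 fun i : Fin n => Λ.mulVec (fourVec n c p - fourVec n c q) i.succ

/-- `ω̄^μ = (√s/2, (ϱ/2)ω)`. -/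
def wbar (n : ℕ) (c : ℝ) (p q ω : EuclideanSpace ℝ (Fin n)) : Fin (n + 1) → ℝ :=
  Fin.cons (Real.sqrt (sQ n c p q) / 2) fun i => (relMom n c p q / 2) * ω i

/-- `ω̃^μ = (√s/2, −(ϱ/2)ω)`. -/
def wtil (n : ℕ) (c : ℝ) (p q ω : EuclideanSpace ℝ (Fin n)) : Fin (n + 1) → ℝ :=
  Fin.cons (Real.sqrt (sQ n c p q) / 2) fun i => -(relMom n c p q / 2) * ω i

/-- The center-of-momentum post-collisional four-vector `p′^μ = (Λ⁻¹)^μ_ν ω̄^ν`. -/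
def postP (n : ℕ) (c : ℝ) (Λ : Matrix (Fin (n + 1)) (Fin (n + 1)) ℝ)
    (p q ω : EuclideanSpace ℝ (Fin n)) : Fin (n + 1) → ℝ :=
  (Linv n Λ).mulVec (wbar n c p q ω)

/-- The center-of-momentum post-collisional four-vector `q′^μ = (Λ⁻¹)^μ_ν ω̃^ν`. -/
def postQ (n : ℕ) (c : ℝ) (Λ : Matrix (Fin (n + 1)) (Fin (n + 1)) ℝ)
    (p q ω : EuclideanSpace ℝ (Fin n)) : Fin (n + 1) → ℝ :=
  (Linv n Λ).mulVec (wtil n c p q ω)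

/-- The spatial part of a vector in `ℝ^{1+n}`. -/
def spat (n : ℕ) (u : Fin (n + 1) → ℝ) : EuclideanSpace ℝ (Fin n) :=
  WithLp.toLp 2 fun i : Fin n => u i.succ

/-- `D₁ = (p⁰+q⁰)² − (ω·(p+q))²`. -/
def D1 (n : ℕ) (c : ℝ) (p q ω : EuclideanSpace ℝ (Fin n)) : ℝ :=
  (energy n c p + energy n c q) ^ 2 - dot n ω (p + q) ^ 2

/-- `D₂ = (p⁰+q⁰){ω·(p⁰q − q⁰p)}`. -/
def D2 (n : ℕ) (c : ℝ) (p q ω : EuclideanSpace ℝ (Fin n)) : ℝ :=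
  (energy n c p + energy n c q) * dot n ω (energy n c p • q - energy n c q • p)

/-- `a(p,q,ω) = 2(p⁰+q⁰){ω·(p⁰q − q⁰p)}/D₁`. -/
def aGS (n : ℕ) (c : ℝ) (p q ω : EuclideanSpace ℝ (Fin n)) : ℝ :=
  2 * (energy n c p + energy n c q) * dot n ω (energy n c p • q - energy n c q • p) /
    D1 n c p q ω

/-- `N⁰(p,q,ω) = 2{ω·(p+q)}{ω·(p⁰q − q⁰p)}/D₁`. -/
def N0 (n : ℕ) (c : ℝ) (p q ω : EuclideanSpace ℝ (Fin n)) : ℝ :=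
  2 * dot n ω (p + q) * dot n ω (energy n c p • q - energy n c q • p) / D1 n c p q ω

/-- The Glassey–Strauss post-collisional momentum `p′ = p + a(p,q,ω)ω`. -/
def gsP (n : ℕ) (c : ℝ) (p q ω : EuclideanSpace ℝ (Fin n)) : EuclideanSpace ℝ (Fin n) :=
  p + aGS n c p q ω • ω

/-- The Glassey–Strauss post-collisional momentum `q′ = q − a(p,q,ω)ω`. -/
def gsQ (n : ℕ) (c : ℝ) (p q ω : EuclideanSpace ℝ (Fin n)) : EuclideanSpace ℝ (Fin n) :=
  q - aGS n c p q ω • ω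

/-- The Glassey–Strauss kernel `B(p,q,ω)`. -/
def BGS (n : ℕ) (c : ℝ) (p q ω : EuclideanSpace ℝ (Fin n)) : ℝ :=
  c * (energy n c p + energy n c q) ^ 2 * energy n c p * energy n c q *
    |dot n ω ((energy n c p)⁻¹ • p - (energy n c q)⁻¹ • q)| / D1 n c p q ω ^ 2

/-- The dimensional factor `A(p,q,ω)`. -/
def AGS (n : ℕ) (c : ℝ) (p q ω : EuclideanSpace ℝ (Fin n)) : ℝ :=
  (4 / relMom n c p q) * (energy n c p + energy n c q) * energy n c p * energy n c q *
    |dot n ω ((energy n c p)⁻¹ • p - (energy n c q)⁻¹ • q)| / D1 n c p q ω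

/-- The dimensional Glassey–Strauss kernel `B_n(p,q,ω) = B(p,q,ω)·(A(p,q,ω))^{n−3}`. -/
def Bn (n : ℕ) (c : ℝ) (p q ω : EuclideanSpace ℝ (Fin n)) : ℝ :=
  BGS n c p q ω * AGS n c p q ω ^ ((n : ℤ) - 3)

/-- The Møller velocity `v_ø(p,q) = (c/4) ϱ √s / (p⁰q⁰)`. -/
def moller (n : ℕ) (c : ℝ) (p q : EuclideanSpace ℝ (Fin n)) : ℝ :=
  (c / 4) * relMom n c p q * Real.sqrt (sQ n c p q) / (energy n c p * energy n c q)

/-- The explicit boost form of the combination appearing in the center-of-momentum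
post-collisional momenta. -/
def cmDir (n : ℕ) (c : ℝ) (p q ω : EuclideanSpace ℝ (Fin n)) : EuclideanSpace ℝ (Fin n) :=
  ω + ((rhoB n c p q - 1) * dot n (p + q) ω / ‖p + q‖ ^ 2) • (p + q)

/-- The explicit boost form of the center-of-momentum post-collisional momentum `p′`. -/
def cmP (n : ℕ) (c : ℝ) (p q ω : EuclideanSpace ℝ (Fin n)) : EuclideanSpace ℝ (Fin n) :=
  (1 / 2 : ℝ) • (p + q) + (relMom n c p q / 2) • cmDir n c p q ω

/-- The explicit boost form of the center-of-momentum post-collisional momentum `q′`. -/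
def cmQ (n : ℕ) (c : ℝ) (p q ω : EuclideanSpace ℝ (Fin n)) : EuclideanSpace ℝ (Fin n) :=
  (1 / 2 : ℝ) • (p + q) - (relMom n c p q / 2) • cmDir n c p q ω

/-- The explicit boost form of the vector `k`. -/
def kB (n : ℕ) (c : ℝ) (p q : EuclideanSpace ℝ (Fin n)) : EuclideanSpace ℝ (Fin n) :=
  (-(energy n c p - energy n c q) / Real.sqrt (sQ n c p q)) • (p + q) + (p - q) +
    ((rhoB n c p q - 1) * dot n (p + q) (p - q) / ‖p + q‖ ^ 2) • (p + q)

/-- The center-of-momentum scattering angle `cos θ_cm = (k/|k|)·ω`. -/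
def cosCM (n : ℕ) (c : ℝ) (p q ω : EuclideanSpace ℝ (Fin n)) : ℝ :=
  dot n (kB n c p q) ω / ‖kB n c p q‖

/-- The Glassey–Strauss scattering angle
`cos θ_gs = 1 − 8{ω·(p⁰q − q⁰p)}²/(D₁ϱ²)`. -/
def cosGS (n : ℕ) (c : ℝ) (p q ω : EuclideanSpace ℝ (Fin n)) : ℝ :=
  1 - 8 * dot n ω (energy n c p • q - energy n c q • p) ^ 2 /
    (D1 n c p q ω * relMom n c p q ^ 2)

/-- The surface measure on the unit sphere `S^{n−1} ⊂ ℝⁿ`. -/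
def sphMeasure (n : ℕ) : Measure (sphere (0 : EuclideanSpace ℝ (Fin n)) 1) :=
  (volume : Measure (EuclideanSpace ℝ (Fin n))).toSphere

open scoped RealInnerProductSpace

section Aux

variable (n : ℕ) (c : ℝ)

lemma mink_expand (u v : Fin (n + 1) → ℝ) :
    u ⬝ᵥ (eta n).mulVec v = -(u 0 * v 0) + ∑ i : Fin n, u i.succ * v i.succ := by
  simp only [eta, Matrix.mulVec_diagonal, dotProduct, Fin.sum_univ_succ]
  simp [Fin.succ_ne_zero, mul_comm]

lemma mink_invar (Λ : Matrix (Fin (n + 1)) (Fin (n + 1)) ℝ) (hΛ : IsLorentz n Λ)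
    (u v : Fin (n + 1) → ℝ) :
    Λ.mulVec u ⬝ᵥ (eta n).mulVec (Λ.mulVec v) = u ⬝ᵥ (eta n).mulVec v := by
  have h := hΛ.2
  calc Λ.mulVec u ⬝ᵥ (eta n).mulVec (Λ.mulVec v)
      = u ⬝ᵥ (Λᵀ * eta n * Λ).mulVec v := by
        rw [Matrix.dotProduct_mulVec, Matrix.dotProduct_mulVec,
          ← Matrix.vecMul_transpose, Matrix.vecMul_vecMul, Matrix.vecMul_vecMul,
          Matrix.mul_assoc, ← Matrix.dotProduct_mulVec]
    _ = u ⬝ᵥ (eta n).mulVec v := by rw [h]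

lemma norm_sq_eq (x : EuclideanSpace ℝ (Fin n)) : ‖x‖ ^ 2 = ∑ i, x i ^ 2 := by
  rw [EuclideanSpace.norm_eq, Real.sq_sqrt (by positivity)]
  simp [sq]

lemma energy_sq (p : EuclideanSpace ℝ (Fin n)) :
    energy n c p ^ 2 = c ^ 2 + ‖p‖ ^ 2 := by
  rw [energy, Real.sq_sqrt (by positivity)]

lemma energy_nonneg (p : EuclideanSpace ℝ (Fin n)) : 0 ≤ energy n c p := Real.sqrt_nonneg _

lemma energy_ge_norm (p : EuclideanSpace ℝ (Fin n)) : ‖p‖ ≤ energy n c p := by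
  rw [energy]
  calc ‖p‖ = Real.sqrt (‖p‖ ^ 2) := by rw [Real.sqrt_sq (norm_nonneg _)]
  _ ≤ Real.sqrt (c ^ 2 + ‖p‖ ^ 2) := Real.sqrt_le_sqrt (by nlinarith)

lemma dot_eq_inner (p q : EuclideanSpace ℝ (Fin n)) : dot n p q = (inner ℝ p q : ℝ) := by
  rw [PiLp.inner_apply, dot]
  simp [mul_comm]

lemma dot_le (p q : EuclideanSpace ℝ (Fin n)) : dot n p q ≤ energy n c p * energy n c q := by
  rw [dot_eq_inner]
  have h1 : (inner ℝ p q : ℝ) ≤ ‖p‖ * ‖q‖ := real_inner_le_norm p q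
  have h2 : ‖p‖ * ‖q‖ ≤ energy n c p * energy n c q :=
    mul_le_mul (energy_ge_norm n c p) (energy_ge_norm n c q) (norm_nonneg _)
      (energy_nonneg n c p)
  linarith

lemma sQ_pos (hc : 0 < c) (p q : EuclideanSpace ℝ (Fin n)) : 0 < sQ n c p q := by
  have := dot_le n c p q
  rw [sQ]; nlinarith

end Aux

/-- If `Λ` is a proper Lorentz transformation satisfying condition (CM)
for `p, q`, and `k^i = Λ^i_μ (p^μ − q^μ)`, then `|k| = ϱ(p,q)`. -/
theorem statement4 (n : ℕ) (hn : 2 ≤ n) (c : ℝ) (hc : 0 < c)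
    (p q : EuclideanSpace ℝ (Fin n)) (Λ : Matrix (Fin (n + 1)) (Fin (n + 1)) ℝ)
    (hΛ : IsLorentz n Λ) (hCM : CM n c Λ p q) :
    ‖kvec n c Λ p q‖ = relMom n c p q := by
  classical
  set u : Fin (n + 1) → ℝ := fourVec n c p - fourVec n c q with hu
  set w : Fin (n + 1) → ℝ := fourVec n c p + fourVec n c q with hw
  set U : Fin (n + 1) → ℝ := Λ.mulVec u with hU
  have hs : 0 < sQ n c p q := sQ_pos n c hc p q
  have hss : 0 < Real.sqrt (sQ n c p q) := Real.sqrt_pos.mpr hs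
  have hu0 : u 0 = energy n c p - energy n c q := by simp [hu, fourVec]
  have hui : ∀ i : Fin n, u i.succ = p i - q i := by intro i; simp [hu, fourVec]
  have hw0 : w 0 = energy n c p + energy n c q := by simp [hw, fourVec]
  have hwi : ∀ i : Fin n, w i.succ = p i + q i := by intro i; simp [hw, fourVec]
  have hp := energy_sq n c p
  have hq := energy_sq n c q
  -- orthogonality of w and u in the Minkowski metric
  have hwu : w ⬝ᵥ (eta n).mulVec u = 0 := by
    rw [mink_expand, hw0, hu0]
    have hsum : ∑ i : Fin n, w i.succ * u i.succ = ‖p‖ ^ 2 - ‖q‖ ^ 2 := by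
      rw [norm_sq_eq, norm_sq_eq, ← Finset.sum_sub_distrib]
      exact Finset.sum_congr rfl fun i _ => by rw [hwi i, hui i]; ring
    rw [hsum]
    nlinarith [hp, hq]
  -- the zeroth component of U vanishes
  have hU0 : U 0 = 0 := by
    have h1 : Λ.mulVec w ⬝ᵥ (eta n).mulVec U = 0 := by
      rw [hU, mink_invar n Λ hΛ w u, hwu]
    have hCM' : Λ.mulVec w = Fin.cons (Real.sqrt (sQ n c p q)) (fun _ => (0 : ℝ)) := hCM
    rw [hCM', mink_expand] at h1
    simp only [Fin.cons_zero, Fin.cons_succ, zero_mul, Finset.sum_const_zero, add_zero] at h1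
    have h2 : Real.sqrt (sQ n c p q) * U 0 = 0 := by linarith
    exact (mul_eq_zero.mp h2).resolve_left hss.ne'
  -- the squared norm of kvec
  have hnorm : ‖kvec n c Λ p q‖ ^ 2
      = 2 * (energy n c p * energy n c q - dot n p q - c ^ 2) := by
    have h2 : U ⬝ᵥ (eta n).mulVec U = u ⬝ᵥ (eta n).mulVec u := mink_invar n Λ hΛ u u
    rw [mink_expand, mink_expand, hU0, hu0] at h2
    have hsum : ∑ i : Fin n, u i.succ * u i.succ
        = ‖p‖ ^ 2 + ‖q‖ ^ 2 - 2 * dot n p q := by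
      rw [norm_sq_eq, norm_sq_eq, dot, Finset.mul_sum, ← Finset.sum_add_distrib,
        ← Finset.sum_sub_distrib]
      exact Finset.sum_congr rfl fun i _ => by rw [hui i]; ring
    rw [hsum] at h2
    have hk : ∑ i : Fin n, kvec n c Λ p q i ^ 2 = ∑ i : Fin n, U i.succ * U i.succ := by
      exact Finset.sum_congr rfl fun i _ => by rw [sq]; rfl
    rw [norm_sq_eq, hk]
    nlinarith [h2, hp, hq]
  rw [relMom, ← hnorm, Real.sqrt_sq (norm_nonneg _)]

end RelBoltz
end
end

section
/- Let p, q ∈ ℝⁿ with p + q ≠ 0. For the boost matrix Λ_b, the vector k ∈ ℝⁿ defined by k^i = (Λ_b)^i_μ (p^μ − q^μ) equals k = −(p+q)(p⁰−q⁰)/√s + (p−q) + (ρ−1)(p+q)((p+q)·(p−q))/|p+q|², where ρ = (p⁰+q⁰)/√s. -/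
noncomputable section

open MeasureTheory Metric Matrix

namespace RelBoltz

/-- For the boost matrix, the vector `k^i = (Λ_b)^i_μ (p^μ − q^μ)` equals
`k = −(p+q)(p⁰−q⁰)/√s + (p−q) + (ρ−1)(p+q)((p+q)·(p−q))/|p+q|²`. -/
theorem statement9 (n : ℕ) (hn : 2 ≤ n) (c : ℝ) (hc : 0 < c)
    (p q : EuclideanSpace ℝ (Fin n)) (hpq : p + q ≠ 0) :
    kvec n c (boost n c p q) p q =
      (-(energy n c p - energy n c q) / Real.sqrt (sQ n c p q)) • (p + q) + (p - q) +
        ((rhoB n c p q - 1) * dot n (p + q) (p - q) / ‖p + q‖ ^ 2) • (p + q) := by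
  have hEp : 0 < energy n c p := Real.sqrt_pos.mpr (by positivity)
  have hEq : 0 < energy n c q := Real.sqrt_pos.mpr (by positivity)
  have hE : energy n c p + energy n c q ≠ 0 := by linarith
  have hN : (0:ℝ) < ‖p + q‖ := norm_pos_iff.mpr hpq
  have hN2 : ‖p + q‖ ^ 2 = ∑ x, (p x + q x) ^ 2 := by
    rw [EuclideanSpace.norm_eq, Real.sq_sqrt (by positivity)]
    exact Finset.sum_congr rfl fun x _ => by
      rw [PiLp.add_apply, Real.norm_eq_abs, sq_abs]
  have hdot : dot n (p + q) (p - q) = ∑ x, (p x + q x) * (p x - q x) := by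
    simp [dot, PiLp.add_apply, PiLp.sub_apply]
  ext i
  simp only [kvec, boost, Matrix.mulVec, dotProduct, Fin.sum_univ_succ, Matrix.of_apply,
    Fin.cases_zero, Fin.cases_succ, Pi.sub_apply, fourVec, Fin.cons_zero, Fin.cons_succ,
    PiLp.add_apply, PiLp.sub_apply, PiLp.smul_apply, smul_eq_mul, PiLp.toLp_apply]
  have hden : (∑ x, ((p x + q x) / (energy n c p + energy n c q)) ^ 2)
      = ‖p + q‖ ^ 2 / (energy n c p + energy n c q) ^ 2 := by
    rw [hN2, Finset.sum_div]
    exact Finset.sum_congr rfl fun x _ => div_pow _ _ _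
  rw [hden]
  have hsum : ∑ x, ((if i = x then (1:ℝ) else 0) +
        (rhoB n c p q - 1) * ((p i + q i) / (energy n c p + energy n c q)) *
          ((p x + q x) / (energy n c p + energy n c q)) /
          (‖p + q‖ ^ 2 / (energy n c p + energy n c q) ^ 2)) * (p x - q x)
      = (p i - q i) + (rhoB n c p q - 1) * (p i + q i) / ‖p + q‖ ^ 2 *
          ∑ x, (p x + q x) * (p x - q x) := by
    rw [Finset.mul_sum]
    simp only [add_mul, Finset.sum_add_distrib, ite_mul, one_mul, zero_mul,
      Finset.sum_ite_eq, Finset.mem_univ, if_true]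
    congr 1
    refine Finset.sum_congr rfl fun x _ => ?_
    field_simp
  rw [hsum, hdot]
  simp only [rhoB]
  rcases eq_or_ne (Real.sqrt (sQ n c p q)) 0 with hs | hs
  · rw [hs]
    simp only [div_zero]
    ring
  · field_simp
    ring

end RelBoltz
end
end
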